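/- The sum of reciprocals of all powerful numbers converges. -/

import Mathlib

def IsPowerful (n : ℕ) : Prop :=
  0 < n ∧ ∀ p : ℕ, p.Prime → p ∣ n → p ^ 2 ∣ n

lemma powerful_decomp : ∀ n : ℕ, IsPowerful n → ∃ a b : ℕ, 0 < a ∧ 0 < b ∧ n = a ^ 2 * b ^ 3 := by
  intro n
  induction n using Nat.strong_induction_on with
  | _ n ih =>
    intro ⟨hn, hpow⟩
    rcases eq_or_lt_of_le (show 1 ≤ n by omega) with h1 | h1
    · exact ⟨1, 1, one_pos, one_pos, by omega⟩
    · set p := n.minFac with hp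
      have hpp : p.Prime := Nat.minFac_prime (by omega)
      have hpd : p ∣ n := Nat.minFac_dvd n
      set e := n.factorization p with he
      have hn0 : n ≠ 0 := by omega
      have he2 : 2 ≤ e := by
        have := hpow p hpp hpd
        rw [← hpp.pow_dvd_iff_le_factorization hn0]
        exact this
      set m := n / p ^ e with hm
      have hnm : p ^ e * m = n := Nat.ordProj_mul_ordCompl_eq_self n p
      have hm0 : 0 < m := Nat.ordCompl_pos p hn0
      have hpm : ¬ p ∣ m := Nat.not_dvd_ordCompl hpp hn0
      have hmlt : m < n := by
        have hpe : 1 < p ^ e := by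
          have := hpp.two_le
          calc 1 < p := this
          _ ≤ p ^ e := Nat.le_self_pow (by omega) p
        nlinarith [hm0, hnm]
      have hmpow : IsPowerful m := by
        refine ⟨hm0, fun q hq hqm => ?_⟩
        have hqp : q ≠ p := fun h => hpm (h ▸ hqm)
        rw [hq.pow_dvd_iff_le_factorization hm0.ne', hm,
          Nat.factorization_ordCompl n p, Finsupp.erase_ne hqp]
        exact (hq.pow_dvd_iff_le_factorization hn0).1 (hpow q hq (hqm.trans ⟨p ^ e, by rw [← hnm]; ring⟩))
      clear_value m e p
      clear hp he hm
      obtain ⟨a, b, ha, hb, hab⟩ := ih m hmlt hmpow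
      rcases Nat.even_or_odd e with ⟨k, hk⟩ | ⟨k, hk⟩
      · refine ⟨p ^ k * a, b, ?_, hb, ?_⟩
        · exact Nat.mul_pos (Nat.pow_pos (n := k) hpp.pos) ha
        · rw [← hnm, hab, hk]; ring
      · have hk1 : 1 ≤ k := by omega
        refine ⟨p ^ (k - 1) * a, p * b, ?_, Nat.mul_pos hpp.pos hb, ?_⟩
        · exact Nat.mul_pos (Nat.pow_pos hpp.pos) ha
        · rw [← hnm, hab]
          have : e = 2 * (k - 1) + 3 := by omega
          rw [this]; ring

set_option maxHeartbeats 1000000 in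
theorem stmt_4 : Summable (fun a : {n : ℕ // IsPowerful n} => (1 : ℝ) / (a : ℕ)) := by
  have h2 : Summable (fun n : ℕ => (1 : ℝ) / (n : ℝ) ^ 2) :=
    Real.summable_one_div_nat_pow.2 (by norm_num)
  have h3 : Summable (fun n : ℕ => (1 : ℝ) / (n : ℝ) ^ 3) :=
    Real.summable_one_div_nat_pow.2 (by norm_num)
  have hprod : Summable (fun q : ℕ × ℕ => ((1 : ℝ) / (q.1 : ℝ) ^ 2) * ((1 : ℝ) / (q.2 : ℝ) ^ 3)) :=
    h2.mul_of_nonneg h3 (fun n => by positivity) (fun n => by positivity)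
  have hdec : ∀ x : {n : ℕ // IsPowerful n}, ∃ q : ℕ × ℕ,
      0 < q.1 ∧ 0 < q.2 ∧ (x : ℕ) = q.1 ^ 2 * q.2 ^ 3 := by
    rintro ⟨n, hn⟩
    obtain ⟨a, b, ha, hb, hab⟩ := powerful_decomp n hn
    exact ⟨(a, b), ha, hb, hab⟩
  choose F hF1 hF2 hF3 using hdec
  have hinj : Function.Injective F := by
    intro x y hxy
    have hx := hF3 x
    have hy := hF3 y
    rw [hxy] at hx
    exact Subtype.ext (hx.trans hy.symm)
  have := hprod.comp_injective hinj
  refine this.congr fun x => ?_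
  have hx := hF3 x
  simp only [Function.comp_apply]
  rw [hx]
  push_cast
  rw [one_div_mul_one_div]
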